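/- If a fuzzy graph G has a vertex u with N_s[u] = V (a strong-universal vertex), then γ_snR(G) = 2·min{μ_s(v) : v is strong-universal}. Moreover, such a minimizing strong-universal vertex u satisfies μ_s(u) ≤ μ_s(v) for all v ∈ V. -/

import Mathlib

noncomputable section
open scoped Classical
open Finset

/-- A fuzzy graph on a vertex set `V`. -/
structure FuzzyGraph (V : Type*) where
  σ : V → ℝ
  μ : V → V → ℝ
  σ_nonneg : ∀ v, 0 ≤ σ v
  σ_le_one : ∀ v, σ v ≤ 1
  μ_nonneg : ∀ u v, 0 ≤ μ u v
  μ_symm : ∀ u v, μ u v = μ v u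
  μ_le : ∀ u v, μ u v ≤ min (σ u) (σ v)
  μ_irrefl : ∀ v, μ v v = 0

namespace FuzzyGraph

variable {V : Type*} (G : FuzzyGraph V)

/-- The strength of a walk (given as its list of vertices): the minimum
membership value of its edges (1 for walks without edges). -/
def walkStrength (l : List V) : ℝ :=
  ((l.zip l.tail).map fun p => G.μ p.1 p.2).foldr min 1

/-- `l` is a `u`–`v` walk: it starts at `u`, ends at `v`, and consecutive
vertices are joined by edges of positive membership. -/
def IsWalk (u v : V) (l : List V) : Prop :=
  l.head? = some u ∧ l.getLast? = some v ∧ l.Chain' (fun a b => 0 < G.μ a b)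

/-- `CONN_G(u,v)`: the maximum strength over all `u`–`v` paths. -/
def conn (u v : V) : ℝ :=
  sSup {s | ∃ l : List V, G.IsWalk u v l ∧ 2 ≤ l.length ∧ s = G.walkStrength l}

/-- The edge `(u,v)` is strong. -/
def StrongEdge (u v : V) : Prop :=
  0 < G.μ u v ∧ G.μ u v = G.conn u v

/-- `μ_s(u)`: the minimum membership value among strong edges at `u`
(`0` if `u` has no strong neighbor, via `Real.sInf_empty`). -/
def mus (u : V) : ℝ :=
  sInf {x | ∃ v, G.StrongEdge u v ∧ x = G.μ u v}

/-- The strong neighborhood degree `d_SN(v)`. -/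
def dSN [Fintype V] (v : V) : ℝ :=
  ∑ u ∈ Finset.univ.filter (fun u => G.StrongEdge v u), G.σ u

/-- `D` is a strong dominating set. -/
def IsStrongDomSet (D : Finset V) : Prop :=
  ∀ v, v ∉ D → ∃ u ∈ D, G.StrongEdge v u

/-- The weight of a strong dominating set. -/
def domWeight (D : Finset V) : ℝ := ∑ u ∈ D, G.mus u

/-- The strong domination number `γ_s(G)`. -/
def gammaS [Fintype V] : ℝ :=
  sInf {w | ∃ D : Finset V, G.IsStrongDomSet D ∧ w = G.domWeight D}

/-- `f` is a strong-neighbors Roman dominating function (SNRDF). -/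
def IsSNRDF (f : V → ℕ) : Prop :=
  (∀ v, f v ≤ 2) ∧ ∀ v, f v = 0 → ∃ u, G.StrongEdge v u ∧ f u = 2

/-- The weight of an SNRDF. -/
def snrdfWeight [Fintype V] (f : V → ℕ) : ℝ := ∑ v, (f v : ℝ) * G.mus v

/-- The strong-neighbors Roman domination number `γ_snR(G)`. -/
def gammaSnR [Fintype V] : ℝ :=
  sInf {w | ∃ f : V → ℕ, G.IsSNRDF f ∧ w = G.snrdfWeight f}

/-- The fuzzy subgraph induced by the vertices satisfying `p`. -/
def induce (p : V → Prop) : FuzzyGraph {v // p v} where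
  σ v := G.σ v
  μ u v := G.μ u v
  σ_nonneg v := G.σ_nonneg v
  σ_le_one v := G.σ_le_one v
  μ_nonneg u v := G.μ_nonneg u v
  μ_symm u v := G.μ_symm u v
  μ_le u v := G.μ_le u v
  μ_irrefl v := G.μ_irrefl v

/-- The minimum membership value among the strong edges of `G`. -/
def muMin : ℝ := sInf {x | ∃ u v, G.StrongEdge u v ∧ x = G.μ u v}

/-- The complement of a fuzzy graph. -/
def compl : FuzzyGraph V where
  σ := G.σ
  μ u v := if u = v then 0 else min (G.σ u) (G.σ v) - G.μ u v
  σ_nonneg := G.σ_nonneg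
  σ_le_one := G.σ_le_one
  μ_nonneg u v := by
    by_cases h : u = v
    · simp [h]
    · simp only [if_neg h, sub_nonneg]
      exact G.μ_le u v
  μ_symm u v := by
    by_cases h : u = v
    · simp [h]
    · have h' : ¬ v = u := fun hh => h hh.symm
      simp only [if_neg h, if_neg h', min_comm (G.σ u), G.μ_symm u v]
  μ_le u v := by
    by_cases h : u = v
    · subst h
      simp only [if_pos rfl, le_min_iff]
      exact ⟨G.σ_nonneg u, G.σ_nonneg u⟩
    · simp only [if_neg h]
      have := G.μ_nonneg u v
      linarith
  μ_irrefl v := by simp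

end FuzzyGraph


namespace FuzzyGraphAux

private lemma zip_take_aux {α : Type*} : ∀ (l₁ l₂ : List α), l₁.zip l₂ = (l₁.take l₂.length).zip l₂
  | [], _ => by simp
  | _ :: _, [] => by simp
  | a :: l₁, b :: l₂ => by simp [zip_take_aux l₁ l₂]

private lemma reverse_zip_aux {α : Type*} : ∀ (l₁ l₂ : List α), l₁.length = l₂.length →
    (l₁.zip l₂).reverse = l₁.reverse.zip l₂.reverse
  | [], [], _ => by simp
  | [], _ :: _, h => by simp at h
  | _ :: _, [], h => by simp at h
  | a :: l₁, b :: l₂, h => by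
    simp only [List.length_cons, add_left_inj] at h
    simp only [List.zip_cons_cons, List.reverse_cons, reverse_zip_aux l₁ l₂ h]
    rw [List.zip_append (by simp [h])]
    simp

private lemma zip_tail_eq {α : Type*} (l : List α) : l.zip l.tail = l.dropLast.zip l.tail := by
  rw [List.dropLast_eq_take, ← List.length_tail]
  exact zip_take_aux l l.tail

lemma pairs_reverse {α : Type*} (l : List α) :
    l.reverse.zip l.reverse.tail = ((l.zip l.tail).map Prod.swap).reverse := by
  rw [zip_tail_eq l, zip_tail_eq l.reverse, List.zip_swap,
    reverse_zip_aux _ _ (by simp [List.length_tail, List.length_dropLast]),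
    List.dropLast_reverse, List.tail_reverse]

lemma foldr_min_le_one : ∀ (L : List ℝ), L.foldr min 1 ≤ 1
  | [] => le_refl 1
  | _ :: L => le_trans (min_le_right _ _) (foldr_min_le_one L)

lemma foldr_min_reverse : ∀ (L : List ℝ), L.reverse.foldr min 1 = L.foldr min 1 := by
  have key : ∀ (L : List ℝ) (b : ℝ), L.foldl min b = L.foldr min b := by
    have h1 : Std.Commutative (α := ℝ) min := ⟨min_comm⟩
    have h2 : Std.Associative (α := ℝ) min := ⟨min_assoc⟩
    exact fun L b => List.foldl_eq_foldr (l := L) (a := b)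
  intro L
  rw [List.foldr_reverse]
  rw [show (fun (x y : ℝ) => min y x) = min from funext₂ fun x y => min_comm y x]
  exact key L 1

end FuzzyGraphAux

namespace FuzzyGraph

variable {V : Type*} (G : FuzzyGraph V)

lemma walkStrength_le_one (l : List V) : G.walkStrength l ≤ 1 :=
  FuzzyGraphAux.foldr_min_le_one _

lemma walkStrength_reverse (l : List V) : G.walkStrength l.reverse = G.walkStrength l := by
  unfold walkStrength
  rw [FuzzyGraphAux.pairs_reverse, List.map_reverse, FuzzyGraphAux.foldr_min_reverse,
    List.map_map]
  congr 1
  exact List.map_congr_left fun p _ => G.μ_symm p.2 p.1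

lemma isWalk_reverse {u v : V} {l : List V} (h : G.IsWalk u v l) : G.IsWalk v u l.reverse := by
  obtain ⟨h1, h2, h3⟩ := h
  refine ⟨?_, ?_, ?_⟩
  · rw [List.head?_reverse]; exact h2
  · rw [List.getLast?_reverse]; exact h1
  · show List.IsChain _ l.reverse
    rw [List.isChain_reverse]
    exact (show List.IsChain _ l from h3).imp fun a b hab => by simpa [flip, G.μ_symm a b] using hab

lemma conn_symm (u v : V) : G.conn u v = G.conn v u := by
  unfold conn
  congr 1
  ext s
  constructor
  · rintro ⟨l, hw, hl, rfl⟩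
    exact ⟨l.reverse, G.isWalk_reverse hw, by simpa using hl, (G.walkStrength_reverse l).symm⟩
  · rintro ⟨l, hw, hl, rfl⟩
    exact ⟨l.reverse, G.isWalk_reverse hw, by simpa using hl, (G.walkStrength_reverse l).symm⟩

lemma strongEdge_symm {u v : V} (h : G.StrongEdge u v) : G.StrongEdge v u := by
  refine ⟨?_, ?_⟩
  · rw [← G.μ_symm]; exact h.1
  · rw [← G.μ_symm, ← G.conn_symm]; exact h.2

lemma mus_nonneg (u : V) : 0 ≤ G.mus u :=
  Real.sInf_nonneg fun x hx => by obtain ⟨w, _, rfl⟩ := hx; exact G.μ_nonneg u w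

lemma mus_le {u v : V} (h : G.StrongEdge u v) : G.mus u ≤ G.μ u v :=
  csInf_le ⟨0, fun x hx => by obtain ⟨w, _, rfl⟩ := hx; exact G.μ_nonneg u w⟩ ⟨v, h, rfl⟩

lemma mus_universal_le {u : V} (hu : ∀ v, v ≠ u → G.StrongEdge u v) {v w : V}
    (h : G.StrongEdge v w) : G.mus u ≤ G.μ v w := by
  by_cases hv : v = u
  · subst hv; exact G.mus_le h
  · by_cases hw : w = u
    · subst hw
      have := G.mus_le (G.strongEdge_symm h)
      rwa [G.μ_symm]
    · have h1 := hu v hv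
      have h2 := hu w hw
      have hle1 : G.mus u ≤ 1 := by
        have a1 := G.mus_le h1
        have a2 := G.μ_le u v
        have a3 := G.σ_le_one u
        have a4 := min_le_left (G.σ u) (G.σ v)
        linarith
      have hwalk : G.IsWalk v w [v, u, w] := by
        refine ⟨rfl, by simp [List.getLast?], ?_⟩
        refine List.isChain_cons_cons.mpr ⟨?_, List.isChain_cons_cons.mpr ⟨h2.1, List.isChain_singleton _⟩⟩
        rw [← G.μ_symm]; exact h1.1
      have hstr : G.walkStrength [v, u, w] = min (G.μ v u) (min (G.μ u w) 1) := by
        simp [walkStrength]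
      have hbdd : BddAbove {s | ∃ l, G.IsWalk v w l ∧ 2 ≤ l.length ∧ s = G.walkStrength l} :=
        ⟨1, fun s hs => by obtain ⟨l, _, _, rfl⟩ := hs; exact G.walkStrength_le_one l⟩
      have hconn : G.walkStrength [v, u, w] ≤ G.conn v w :=
        le_csSup hbdd ⟨[v, u, w], hwalk, by norm_num, rfl⟩
      rw [h.2]
      refine le_trans ?_ hconn
      rw [hstr]
      refine le_min ?_ (le_min (G.mus_le h2) hle1)
      rw [← G.μ_symm]; exact G.mus_le h1

lemma mus_universal_min {u : V} (hu : ∀ v, v ≠ u → G.StrongEdge u v) (v : V) :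
    G.mus u ≤ G.mus v := by
  by_cases hv : v = u
  · subst hv; exact le_refl _
  · refine le_csInf ⟨G.μ v u, u, G.strongEdge_symm (hu v hv), rfl⟩ ?_
    rintro x ⟨w, hw, rfl⟩
    exact G.mus_universal_le hu hw

end FuzzyGraph

/-- if `G` has a strong-universal vertex then
`γ_snR(G) = 2·min{μ_s(v) : v strong-universal}`, and any minimizing
strong-universal vertex has globally minimal `μ_s`. -/
theorem gammaSnR_of_universal {V : Type*} [Fintype V]
    (G : FuzzyGraph V) (hu : ∃ u : V, ∀ v, v ≠ u → G.StrongEdge u v) :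
    G.gammaSnR =
        2 * sInf {x | ∃ v : V, (∀ w, w ≠ v → G.StrongEdge v w) ∧ x = G.mus v} ∧
      ∀ u : V, (∀ w, w ≠ u → G.StrongEdge u w) →
        G.mus u =
          sInf {x | ∃ v : V, (∀ w, w ≠ v → G.StrongEdge v w) ∧ x = G.mus v} →
        ∀ v : V, G.mus u ≤ G.mus v := by
  obtain ⟨u₀, hu₀⟩ := hu
  have hSinf : sInf {x | ∃ v : V, (∀ w, w ≠ v → G.StrongEdge v w) ∧ x = G.mus v} = G.mus u₀ := by
    apply le_antisymm
    · exact csInf_le ⟨0, by rintro x ⟨v, _, rfl⟩; exact G.mus_nonneg v⟩ ⟨u₀, hu₀, rfl⟩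
    · refine le_csInf ⟨G.mus u₀, u₀, hu₀, rfl⟩ ?_
      rintro x ⟨v, hv, rfl⟩
      exact G.mus_universal_min hu₀ v
  set f₀ : V → ℕ := fun v => if v = u₀ then 2 else 0 with hf₀def
  have hf₀ : G.IsSNRDF f₀ := by
    constructor
    · intro v; by_cases h : v = u₀ <;> simp [hf₀def, h]
    · intro v hv
      have hvne : v ≠ u₀ := by intro h; simp [hf₀def, h] at hv
      exact ⟨u₀, G.strongEdge_symm (hu₀ v hvne), by simp [hf₀def]⟩
  have hw₀ : G.snrdfWeight f₀ = 2 * G.mus u₀ := by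
    unfold FuzzyGraph.snrdfWeight
    rw [Finset.sum_eq_single u₀]
    · simp [hf₀def]
    · intro b _ hb; simp [hf₀def, hb]
    · intro h; exact absurd (Finset.mem_univ u₀) h
  have hwnonneg : ∀ f : V → ℕ, 0 ≤ G.snrdfWeight f := fun f =>
    Finset.sum_nonneg fun v _ => mul_nonneg (Nat.cast_nonneg _) (G.mus_nonneg v)
  have hγle : G.gammaSnR ≤ 2 * G.mus u₀ := by
    rw [← hw₀]
    exact csInf_le ⟨0, by rintro x ⟨f, _, rfl⟩; exact hwnonneg f⟩ ⟨f₀, hf₀, rfl⟩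
  have hγge : 2 * G.mus u₀ ≤ G.gammaSnR := by
    refine le_csInf ⟨_, f₀, hf₀, rfl⟩ ?_
    rintro x ⟨f, hf, rfl⟩
    by_cases hz : ∃ v, f v = 0
    · obtain ⟨v, hv⟩ := hz
      obtain ⟨w, hsw, hfw⟩ := hf.2 v hv
      have h1 : 2 * G.mus u₀ ≤ (f w : ℝ) * G.mus w := by
        rw [hfw]; push_cast
        exact mul_le_mul_of_nonneg_left (G.mus_universal_min hu₀ w) (by norm_num)
      refine h1.trans ?_
      exact Finset.single_le_sum
        (fun v _ => mul_nonneg (Nat.cast_nonneg _) (G.mus_nonneg v)) (Finset.mem_univ w)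
    · push_neg at hz
      by_cases hV : ∃ v, v ≠ u₀
      · obtain ⟨v, hv⟩ := hV
        have hsum : ∑ x ∈ ({u₀, v} : Finset V), (f x : ℝ) * G.mus x ≤ G.snrdfWeight f :=
          Finset.sum_le_sum_of_subset_of_nonneg (Finset.subset_univ _)
            fun i _ _ => mul_nonneg (Nat.cast_nonneg _) (G.mus_nonneg i)
        rw [Finset.sum_pair (Ne.symm hv)] at hsum
        have h1 : (1 : ℝ) ≤ (f u₀ : ℝ) := by
          exact_mod_cast Nat.one_le_iff_ne_zero.mpr (hz u₀)
        have h2 : (1 : ℝ) ≤ (f v : ℝ) := by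
          exact_mod_cast Nat.one_le_iff_ne_zero.mpr (hz v)
        have h3 := G.mus_universal_min hu₀ v
        have h4 := G.mus_nonneg u₀
        have h5 := G.mus_nonneg v
        have e1 : G.mus u₀ ≤ (f u₀ : ℝ) * G.mus u₀ := le_mul_of_one_le_left h4 h1
        have e2 : G.mus v ≤ (f v : ℝ) * G.mus v := le_mul_of_one_le_left h5 h2
        linarith
      · push_neg at hV
        have hmus0 : G.mus u₀ = 0 := by
          have hset : {x | ∃ v, G.StrongEdge u₀ v ∧ x = G.μ u₀ v} = ∅ := by
            ext x
            simp only [Set.mem_setOf_eq, Set.mem_empty_iff_false, iff_false]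
            rintro ⟨v, hsv, rfl⟩
            have hvu : v = u₀ := hV v
            subst hvu
            exact absurd hsv.1 (by simp [G.μ_irrefl])
          rw [FuzzyGraph.mus, hset, Real.sInf_empty]
        rw [hmus0]
        simpa using hwnonneg f
  refine ⟨?_, ?_⟩
  · rw [hSinf]
    exact le_antisymm hγle hγge
  · intro u hun _ v
    exact G.mus_universal_min hun v
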